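/- arXiv:1802.04729 — 2 statements merged into one kernel-verified Lean document; each statement's English description precedes it below -/
import Mathlib

section
/- Let χ ∈ Sp(d,ℝ) with blocks [[A,B],[C,D]], and suppose the quadratic phase φ(x,y,θ) = ½⟨(x,y), F(x,y)⟩ + ⟨Lθ,(x,y)⟩ + ½⟨θ,Qθ⟩ with [L;Q] injective parametrizes the twisted graph Lagrangian Λ'_χ, i.e., Λ'_χ = {((x,y), φ'_{(x,y)}(x,y,θ)) : φ'_θ(x,y,θ) = 0}. Writing F = [[E,G],[Gᵀ,H]] and L = [P;R] with E,G,H ∈ M_{d×d}(ℝ) (E, H symmetric) and P,R ∈ M_{d×N}(ℝ), the (2d+N)×(2d+N) matrix [[Gᵀ, H, R],[0, I, 0],[Pᵀ, Rᵀ, Q]] is invertible. -/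
open Matrix

/-- Invertibility of the matrix `[[Gᵀ,H,R],[0,I,0],[Pᵀ,Rᵀ,Q]]` for a quadratic phase
function parametrizing the twisted graph Lagrangian of `χ = [[A,B],[C,D]]`. -/
theorem phase_nondegeneracy (d N : ℕ)
    (A B C D E G H : Matrix (Fin d) (Fin d) ℝ)
    (P R : Matrix (Fin d) (Fin N) ℝ) (Q : Matrix (Fin N) (Fin N) ℝ)
    (hχ : (Matrix.fromBlocks A B C D)ᵀ *
        Matrix.fromBlocks (0 : Matrix (Fin d) (Fin d) ℝ) 1 (-1) 0 *
        Matrix.fromBlocks A B C D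
      = Matrix.fromBlocks (0 : Matrix (Fin d) (Fin d) ℝ) 1 (-1) 0)
    (hE : Eᵀ = E) (hH : Hᵀ = H) (hQ : Qᵀ = Q)
    (hinj : ∀ θ : Fin N → ℝ,
      P.mulVec θ = 0 → R.mulVec θ = 0 → Q.mulVec θ = 0 → θ = 0)
    (hparam : {p : (Fin d → ℝ) × (Fin d → ℝ) × (Fin d → ℝ) × (Fin d → ℝ) |
        ∃ θ : Fin N → ℝ,
          Pᵀ.mulVec p.1 + Rᵀ.mulVec p.2.1 + Q.mulVec θ = 0 ∧
          p.2.2.1 = E.mulVec p.1 + G.mulVec p.2.1 + P.mulVec θ ∧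
          p.2.2.2 = Gᵀ.mulVec p.1 + H.mulVec p.2.1 + R.mulVec θ}
      = {p | ∃ η : Fin d → ℝ,
          p.2.2.2 = -η ∧ p.1 = A.mulVec p.2.1 + B.mulVec η ∧
          p.2.2.1 = C.mulVec p.2.1 + D.mulVec η}) :
    IsUnit (Matrix.fromBlocks Gᵀ (Matrix.fromCols H R)
      (Matrix.fromRows (0 : Matrix (Fin d) (Fin d) ℝ) Pᵀ)
      (Matrix.fromBlocks (1 : Matrix (Fin d) (Fin d) ℝ) 0 Rᵀ Q)) := by
  rw [Matrix.isUnit_iff_isUnit_det, isUnit_iff_ne_zero]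
  intro hdet
  obtain ⟨v, hv, hMv⟩ := Matrix.exists_mulVec_eq_zero_iff.mpr hdet
  set x : Fin d → ℝ := v ∘ Sum.inl with hx
  set y : Fin d → ℝ := (v ∘ Sum.inr) ∘ Sum.inl with hy
  set θ : Fin N → ℝ := (v ∘ Sum.inr) ∘ Sum.inr with hθ
  clear_value x y θ
  have hvinr : v ∘ Sum.inr = Sum.elim y θ := by
    rw [hy, hθ]
    ext i; cases i <;> rfl
  rw [Matrix.fromBlocks_mulVec] at hMv
  rw [hvinr, Matrix.fromCols_mulVec_sumElim, Matrix.fromBlocks_mulVec] at hMv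
  simp only [Sum.elim_comp_inl, Sum.elim_comp_inr, Matrix.fromRows_mulVec] at hMv
  rw [← hx] at hMv
  -- extract components
  have eq1 : Gᵀ.mulVec x + (H.mulVec y + R.mulVec θ) = 0 := by
    funext i; exact congrFun hMv (Sum.inl i)
  have eq2 : (0 : Matrix (Fin d) (Fin d) ℝ).mulVec x +
      ((1 : Matrix (Fin d) (Fin d) ℝ).mulVec y +
        (0 : Matrix (Fin d) (Fin N) ℝ).mulVec θ) = 0 := by
    funext i; exact congrFun hMv (Sum.inr (Sum.inl i))
  have eq3 : Pᵀ.mulVec x + (Rᵀ.mulVec y + Q.mulVec θ) = 0 := by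
    funext i; exact congrFun hMv (Sum.inr (Sum.inr i))
  have hy0 : y = 0 := by
    simpa using eq2
  subst hy0
  simp only [Matrix.mulVec_zero, add_zero, zero_add] at eq1 eq3
  -- use the parametrization on the point (x, 0, Ex + Pθ, Gᵀx + Rθ)
  have hmem : ((x, (0 : Fin d → ℝ), E.mulVec x + P.mulVec θ,
      Gᵀ.mulVec x + R.mulVec θ) :
      (Fin d → ℝ) × (Fin d → ℝ) × (Fin d → ℝ) × (Fin d → ℝ)) ∈
      {p : (Fin d → ℝ) × (Fin d → ℝ) × (Fin d → ℝ) × (Fin d → ℝ) |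
        ∃ θ : Fin N → ℝ,
          Pᵀ.mulVec p.1 + Rᵀ.mulVec p.2.1 + Q.mulVec θ = 0 ∧
          p.2.2.1 = E.mulVec p.1 + G.mulVec p.2.1 + P.mulVec θ ∧
          p.2.2.2 = Gᵀ.mulVec p.1 + H.mulVec p.2.1 + R.mulVec θ} := by
    refine ⟨θ, ?_, ?_, ?_⟩ <;> simp [add_assoc, eq3]
  rw [hparam] at hmem
  obtain ⟨η, hη1, hη2, hη3⟩ := hmem
  have hη0 : η = 0 := by
    have : Gᵀ.mulVec x + R.mulVec θ = -η := hη1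
    rw [eq1] at this
    simpa using this.symm
  subst hη0
  simp only [Matrix.mulVec_zero, add_zero] at hη2 hη3
  have hx0 : x = 0 := by simpa using hη2
  subst hx0
  simp only [Matrix.mulVec_zero, zero_add] at eq1 eq3 hη3
  have hP0 : P.mulVec θ = 0 := by simpa using hη3
  have hθ0 : θ = 0 := hinj θ hP0 eq1 eq3
  apply hv
  funext i
  rcases i with i | i | i
  · exact (congrFun hx i).symm
  · exact (congrFun hy i).symm
  · exact (congrFun hθ i).symm.trans (congrFun hθ0 i)
end

section
/- Let 0 ≤ n ≤ d and U = [M₁ M₂] ∈ O(d) with M₁ ∈ M_{d×n}(ℝ), M₂ ∈ M_{d×(d−n)}(ℝ), set Y = ker M₂ᵀ ⊆ ℝ^d, let χ^U = diag(U,U) ∈ Sp(d,ℝ), and let J₂^{-1} be the symplectic matrix sending (x₁,x₂,ξ₁,ξ₂) ↦ (x₁, −ξ₂, ξ₁, x₂) with x₁ ∈ ℝ^n, x₂ ∈ ℝ^{d−n}. Then χ^U J₂^{-1} maps ℝ^d × {0} isomorphically onto Y × Y^⊥ ⊆ ℝ^d × ℝ^d. -/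
open Matrix

/-- For `U = [M₁ M₂] ∈ O(d)` with `Y = ker M₂ᵀ`, the map `χ^U J₂⁻¹` sends `ℝ^d × {0}`
bijectively onto `Y × Y^⊥`. -/
theorem chiU_J2inv_bijection (d n : ℕ) (hn : n ≤ d)
    (M₁ : Matrix (Fin d) (Fin n) ℝ) (M₂ : Matrix (Fin d) (Fin (d - n)) ℝ)
    (hU1 : (Matrix.fromCols M₁ M₂)ᵀ * Matrix.fromCols M₁ M₂ = 1)
    (hU2 : Matrix.fromCols M₁ M₂ * (Matrix.fromCols M₁ M₂)ᵀ = 1) :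
    Set.BijOn
      (fun v : ((Fin n ⊕ Fin (d - n)) → ℝ) × ((Fin n ⊕ Fin (d - n)) → ℝ) =>
        ((Matrix.fromCols M₁ M₂).mulVec
            (Sum.elim (v.1 ∘ Sum.inl) (-(v.2 ∘ Sum.inr))),
         (Matrix.fromCols M₁ M₂).mulVec
            (Sum.elim (v.2 ∘ Sum.inl) (v.1 ∘ Sum.inr))))
      (Set.univ ×ˢ {0})
      ({x : Fin d → ℝ | M₂ᵀ.mulVec x = 0} ×ˢ
        {z : Fin d → ℝ | ∀ y : Fin d → ℝ, M₂ᵀ.mulVec y = 0 → y ⬝ᵥ z = (0 : ℝ)}) := by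
  have hU1' : fromBlocks (M₁ᵀ * M₁) (M₁ᵀ * M₂) (M₂ᵀ * M₁) (M₂ᵀ * M₂)
      = fromBlocks (1 : Matrix (Fin n) (Fin n) ℝ) 0 0 (1 : Matrix (Fin (d-n)) (Fin (d-n)) ℝ) := by
    rw [← fromRows_mul_fromCols, ← transpose_fromCols, hU1, fromBlocks_one]
  have h11 : M₁ᵀ * M₁ = 1 := by
    have := congrArg Matrix.toBlocks₁₁ hU1'
    rwa [toBlocks_fromBlocks₁₁, toBlocks_fromBlocks₁₁] at this
  have h21 : M₂ᵀ * M₁ = 0 := by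
    have := congrArg Matrix.toBlocks₂₁ hU1'
    rwa [toBlocks_fromBlocks₂₁, toBlocks_fromBlocks₂₁] at this
  have h22 : M₂ᵀ * M₂ = 1 := by
    have := congrArg Matrix.toBlocks₂₂ hU1'
    rwa [toBlocks_fromBlocks₂₂, toBlocks_fromBlocks₂₂] at this
  have hsum : M₁ * M₁ᵀ + M₂ * M₂ᵀ = 1 := by
    rw [← fromCols_mul_fromRows, ← transpose_fromCols]; exact hU2
  -- perpendicularity : M₂ᵀ *ᵥ (M₁ *ᵥ a) = 0
  have hperp : ∀ a : Fin n → ℝ, M₂ᵀ.mulVec (M₁.mulVec a) = 0 := by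
    intro a; rw [mulVec_mulVec, h21, zero_mulVec]
  have hdot : ∀ (y : Fin d → ℝ) (b : Fin (d-n) → ℝ),
      y ⬝ᵥ M₂.mulVec b = (M₂ᵀ.mulVec y) ⬝ᵥ b := by
    intro y b; rw [dotProduct_mulVec, mulVec_transpose]
  refine ⟨?_, ?_, ?_⟩
  · rintro ⟨a, z⟩ ⟨-, hz⟩
    have hz0 : z = 0 := hz
    subst hz0
    constructor
    · show M₂ᵀ.mulVec _ = 0
      simp [hperp]
    · intro y hy
      show y ⬝ᵥ _ = 0
      simp [hdot, hy]
  · rintro ⟨a, z⟩ ⟨-, hz⟩ ⟨a', z'⟩ ⟨-, hz'⟩ heq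
    have hz0 : z = 0 := hz
    have hz0' : z' = 0 := hz'
    subst hz0; subst hz0'
    simp only [Prod.mk.injEq] at heq
    obtain ⟨h1, h2⟩ := heq
    simp only [Pi.zero_comp, neg_zero, fromCols_mulVec_sumElim, mulVec_zero,
      add_zero, zero_add] at h1 h2
    have e1 : a ∘ Sum.inl = a' ∘ Sum.inl := by
      have := congrArg (fun w => M₁ᵀ.mulVec w) h1
      simpa [mulVec_mulVec, h11] using this
    have e2 : a ∘ Sum.inr = a' ∘ Sum.inr := by
      have := congrArg (fun w => M₂ᵀ.mulVec w) h2
      simpa [mulVec_mulVec, h22] using this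
    have : a = a' := by
      funext x
      cases x with
      | inl i => exact congrFun e1 i
      | inr i => exact congrFun e2 i
    simp [this]
  · rintro ⟨x, z⟩ ⟨hx, hz⟩
    have hx : M₂ᵀ.mulVec x = 0 := hx
    have hz : ∀ y : Fin d → ℝ, M₂ᵀ.mulVec y = 0 → y ⬝ᵥ z = 0 := hz
    -- x = M₁ M₁ᵀ x
    have hxeq : M₁.mulVec (M₁ᵀ.mulVec x) = x := by
      have := congrFun (congrArg (fun M => M.mulVec x) hsum) -- not used directly
      have h := congrArg (fun M => M.mulVec x) hsum
      simp only [add_mulVec, one_mulVec] at h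
      rw [mulVec_mulVec]
      rw [← mulVec_mulVec x M₂ M₂ᵀ, hx, mulVec_zero, add_zero] at h
      exact h
    -- z = M₂ M₂ᵀ z
    have hzsum : M₁.mulVec (M₁ᵀ.mulVec z) + M₂.mulVec (M₂ᵀ.mulVec z) = z := by
      have h := congrArg (fun M => M.mulVec z) hsum
      simpa [add_mulVec, one_mulVec, mulVec_mulVec] using h
    have hy0 : M₁.mulVec (M₁ᵀ.mulVec z) = 0 := by
      set y := M₁.mulVec (M₁ᵀ.mulVec z) with hy
      have hyker : M₂ᵀ.mulVec y = 0 := hperp _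
      have hyz : y ⬝ᵥ z = 0 := hz y hyker
      have : y ⬝ᵥ z = y ⬝ᵥ y := by
        conv_lhs => rw [← hzsum]
        rw [dotProduct_add, hdot, hyker, zero_dotProduct, add_zero]
      have hyy : y ⬝ᵥ y = 0 := by rw [← this, hyz]
      exact dotProduct_self_eq_zero.mp hyy
    have hzeq : M₂.mulVec (M₂ᵀ.mulVec z) = z := by
      conv_rhs => rw [← hzsum]
      rw [hy0, zero_add]
    refine ⟨(Sum.elim (M₁ᵀ.mulVec x) (M₂ᵀ.mulVec z), 0), ⟨trivial, rfl⟩, ?_⟩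
    simp only [Pi.zero_comp, neg_zero, Sum.elim_comp_inl, Sum.elim_comp_inr,
      fromCols_mulVec_sumElim, mulVec_zero, add_zero, zero_add]
    exact Prod.ext hxeq hzeq
end
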